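/- Let H be a real Hilbert space, let A : H → 2^H be maximally monotone, let β > 0, and let B : H → H be a monotone, β-Lipschitz operator with zer(A+B) ≠ ∅. Let (a_n), (b_n), (c_n) be sequences in H with Σ_n ‖a_n‖ < ∞, Σ_n ‖b_n‖ < ∞, Σ_n ‖c_n‖ < ∞, let x_0 ∈ H, let ε ∈ (0, 1/(β+1)), let (γ_n) be a sequence in [ε, (1−ε)/β], and define for every n: y_n = x_n − γ_n(B x_n + a_n); p_n = J_{γ_n A} y_n + b_n; q_n = p_n − γ_n(B p_n + c_n); x_{n+1} = x_n − y_n + q_n. Let x̄ ∈ zer(A+B) be the weak limit of (x_n). If A + B is demiregular at x̄, then x_n → x̄ and p_n → x̄ in norm. -/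

import Mathlib

open scoped InnerProductSpace
open Filter Topology

/-- A set-valued operator on a real inner product space is monotone. -/
def MonotoneSV {H : Type*} [NormedAddCommGroup H] [InnerProductSpace ℝ H]
    (A : H → Set H) : Prop :=
  ∀ x y u v : H, u ∈ A x → v ∈ A y → 0 ≤ ⟪x - y, u - v⟫_ℝ

/-- A set-valued operator is maximally monotone: it is monotone and any point that is
monotonically related to its graph belongs to its graph. -/
def MaxMonotone {H : Type*} [NormedAddCommGroup H] [InnerProductSpace ℝ H]
    (A : H → Set H) : Prop :=
  MonotoneSV A ∧ ∀ x u : H, (∀ y v : H, v ∈ A y → (0:ℝ) ≤ ⟪x - y, u - v⟫_ℝ) → u ∈ A x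

/-- `J` is the resolvent `(Id + γ A)⁻¹` of `γ A`. -/
def IsResolvent {E : Type*} [AddCommGroup E] [Module ℝ E]
    (γ : ℝ) (A : E → Set E) (J : E → E) : Prop :=
  ∀ w, ∃ u ∈ A (J w), w = J w + γ • u

/-- Weak convergence of a sequence in an inner product space. -/
def WeakTendsto {H : Type*} [NormedAddCommGroup H] [InnerProductSpace ℝ H]
    (x : ℕ → H) (l : H) : Prop :=
  ∀ w : H, Filter.Tendsto (fun n => ⟪x n, w⟫_ℝ) Filter.atTop (nhds ⟪l, w⟫_ℝ)

/-- An operator `M` is demiregular at `x`: for every sequence `(xs n, us n)` in the graph of `M`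
and every `u ∈ M x` such that `xs n ⇀ x` weakly and `us n → u` strongly, one has `xs n → x`
strongly. -/
def Demiregular {H : Type*} [NormedAddCommGroup H] [InnerProductSpace ℝ H]
    (M : H → Set H) (x : H) : Prop :=
  ∀ (xs us : ℕ → H) (u : H), (∀ n, us n ∈ M (xs n)) → u ∈ M x →
    WeakTendsto xs x → Filter.Tendsto us Filter.atTop (nhds u) →
    Filter.Tendsto xs Filter.atTop (nhds x)

lemma resolvent_nonexpansive {H : Type*} [NormedAddCommGroup H] [InnerProductSpace ℝ H]
    {A : H → Set H} (hA : MonotoneSV A) {γ : ℝ} (hγ : 0 < γ) {J : H → H}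
    (hJ : IsResolvent γ A J) (z z' : H) : ‖J z - J z'‖ ≤ ‖z - z'‖ := by
  obtain ⟨u, hu, hz⟩ := hJ z
  obtain ⟨u', hu', hz'⟩ := hJ z'
  have hmono := hA _ _ _ _ hu hu'
  have hzz : z - z' = (J z - J z') + γ • (u - u') := by
    conv_lhs => rw [hz, hz']
    rw [smul_sub]; abel
  have h1 : ⟪J z - J z', z - z'⟫_ℝ = ‖J z - J z'‖^2 + γ * ⟪J z - J z', u - u'⟫_ℝ := by
    rw [hzz, inner_add_right, real_inner_smul_right, real_inner_self_eq_norm_sq]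
  have h3 := real_inner_le_norm (J z - J z') (z - z')
  nlinarith [norm_nonneg (J z - J z'), norm_nonneg (z - z'), mul_nonneg hγ.le hmono]

lemma core_ineq {H : Type*} [NormedAddCommGroup H] [InnerProductSpace ℝ H]
    {A : H → Set H} (hA : MonotoneSV A)
    {B : H → H} (hBmono : ∀ x y : H, 0 ≤ ⟪x - y, B x - B y⟫_ℝ)
    {β : ℝ} (hBlip : ∀ x y : H, ‖B x - B y‖ ≤ β * ‖x - y‖)
    {γ : ℝ} (hγ : 0 < γ) {J : H → H} (hJ : IsResolvent γ A J)
    {w : H} (hw : -B w ∈ A w) (v : H) :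
    ‖(J (v - γ • B v) + γ • (B v - B (J (v - γ • B v)))) - w‖^2 ≤
      ‖v - w‖^2 - (1 - γ^2*β^2) * ‖v - J (v - γ • B v)‖^2 := by
  obtain ⟨u, huA, h⟩ := hJ (v - γ • B v)
  set P := J (v - γ • B v) with hP
  have ht : v - P = γ • u + γ • B v := by
    have e : v - P = (v - γ • B v) - P + γ • B v := by abel
    rw [e, h]; abel
  have hexp1 : ‖(P + γ • (B v - B P)) - w‖^2
      = ‖P - w‖^2 + 2*(γ*⟪P - w, B v - B P⟫_ℝ) + γ^2*‖B v - B P‖^2 := by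
    have e : (P + γ • (B v - B P)) - w = (P - w) + γ • (B v - B P) := by abel
    rw [e, norm_add_sq_real, real_inner_smul_right, norm_smul, Real.norm_eq_abs, mul_pow, sq_abs]
  have hexp2 : ‖v - w‖^2 = ‖v - P‖^2 + 2*⟪v - P, P - w⟫_ℝ + ‖P - w‖^2 := by
    have e : v - w = (v - P) + (P - w) := by abel
    rw [e, norm_add_sq_real]
  have hts : ⟪v - P, P - w⟫_ℝ = γ*⟪u, P - w⟫_ℝ + γ*⟪B v, P - w⟫_ℝ := by
    rw [ht, inner_add_left, real_inner_smul_left, real_inner_smul_left]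
  have hmonA : (0:ℝ) ≤ ⟪P - w, u⟫_ℝ + ⟪P - w, B w⟫_ℝ := by
    have h0 := hA P w u (-B w) huA hw
    rw [sub_neg_eq_add, inner_add_right] at h0
    exact h0
  have hmonB : (0:ℝ) ≤ ⟪P - w, B P⟫_ℝ - ⟪P - w, B w⟫_ℝ := by
    have := hBmono P w
    simpa [inner_sub_right] using this
  have hlip := hBlip v P
  have hlip2 : ‖B v - B P‖^2 ≤ β^2 * ‖v - P‖^2 := by
    nlinarith [norm_nonneg (B v - B P), norm_nonneg (v - P), hlip]
  have hγlip : γ^2 * ‖B v - B P‖^2 ≤ γ^2 * (β^2 * ‖v - P‖^2) :=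
    mul_le_mul_of_nonneg_left hlip2 (sq_nonneg γ)
  have hsum : (0:ℝ) ≤ γ * (⟪P - w, u⟫_ℝ + ⟪P - w, B P⟫_ℝ) := by
    apply mul_nonneg hγ.le; linarith
  have hc1 : ⟪P - w, B v - B P⟫_ℝ = ⟪P - w, B v⟫_ℝ - ⟪P - w, B P⟫_ℝ := by
    rw [inner_sub_right]
  have hc2 : ⟪u, P - w⟫_ℝ = ⟪P - w, u⟫_ℝ := real_inner_comm _ _
  have hc3 : ⟪B v, P - w⟫_ℝ = ⟪P - w, B v⟫_ℝ := real_inner_comm _ _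
  rw [hexp1, hexp2]
  nlinarith [hsum, hγlip]

set_option maxHeartbeats 1000000 in
theorem stmt_2 {H : Type*} [NormedAddCommGroup H] [InnerProductSpace ℝ H] [CompleteSpace H]
    (A : H → Set H) (hA : MaxMonotone A)
    (β : ℝ) (hβ : 0 < β)
    (B : H → H)
    (hBmono : ∀ x y : H, 0 ≤ ⟪x - y, B x - B y⟫_ℝ)
    (hBlip : ∀ x y : H, ‖B x - B y‖ ≤ β * ‖x - y‖)
    (hzer : ∃ w : H, -B w ∈ A w)
    (a b c : ℕ → H)
    (ha : Summable fun n => ‖a n‖) (hb : Summable fun n => ‖b n‖)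
    (hc : Summable fun n => ‖c n‖)
    (ε : ℝ) (hε : ε ∈ Set.Ioo (0:ℝ) (1 / (β + 1)))
    (γ : ℕ → ℝ) (hγ : ∀ n, γ n ∈ Set.Icc ε ((1 - ε) / β))
    (J : ℕ → H → H) (hJ : ∀ n, IsResolvent (γ n) A (J n))
    (x y p q : ℕ → H)
    (hy : ∀ n, y n = x n - γ n • (B (x n) + a n))
    (hp : ∀ n, p n = J n (y n) + b n)
    (hq : ∀ n, q n = p n - γ n • (B (p n) + c n))
    (hx : ∀ n, x (n + 1) = x n - y n + q n)
    (xbar : H) (hxbar : -B xbar ∈ A xbar)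
    (hweak : WeakTendsto x xbar)
    (hdemi : Demiregular (fun w => (· + B w) '' A w) xbar) :
    Filter.Tendsto x Filter.atTop (nhds xbar) ∧
      Filter.Tendsto p Filter.atTop (nhds xbar) := by
  obtain ⟨hε0, hε1⟩ := hε
  set Γ : ℝ := (1 - ε) / β with hΓdef
  have hε1' : ε < 1 := by
    have h1 : 1 / (β + 1) < 1 := by
      rw [div_lt_one (by linarith)]; linarith
    linarith
  have hΓ0 : 0 ≤ Γ := div_nonneg (by linarith) hβ.le
  have hγpos : ∀ n, 0 < γ n := fun n => lt_of_lt_of_le hε0 (hγ n).1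
  have hγε : ∀ n, ε ≤ γ n := fun n => (hγ n).1
  have hγΓ : ∀ n, γ n ≤ Γ := fun n => (hγ n).2
  have hγβ : ∀ n, γ n * β ≤ 1 - ε := fun n => by
    have := (hγ n).2
    rw [le_div_iff₀ hβ] at this
    exact this
  set δ : ℝ := 1 - (1 - ε)^2 with hδdef
  have hδ : 0 < δ := by
    have : (1 - ε)^2 < 1 := by nlinarith
    simp only [hδdef]; linarith
  -- exact auxiliary sequences
  set phat : ℕ → H := fun n => J n (x n - γ n • B (x n)) with hphat
  set xhat : ℕ → H := fun n => phat n + γ n • (B (x n) - B (phat n)) with hxhat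
  have core : ∀ n, ‖xhat n - xbar‖^2 ≤
      ‖x n - xbar‖^2 - (1 - (γ n)^2*β^2) * ‖x n - phat n‖^2 := fun n =>
    core_ineq hA.1 hBmono hBlip (hγpos n) (hJ n) hxbar (x n)
  have core' : ∀ n, ‖xhat n - xbar‖^2 ≤ ‖x n - xbar‖^2 - δ * ‖x n - phat n‖^2 := by
    intro n
    have h1 := core n
    have h2 : (γ n)^2 * β^2 ≤ (1 - ε)^2 := by
      have h3 : 0 ≤ γ n * β := mul_nonneg (hγpos n).le hβ.le
      nlinarith [hγβ n]
    nlinarith [sq_nonneg ‖x n - phat n‖]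
  have hxhatle : ∀ n, ‖xhat n - xbar‖ ≤ ‖x n - xbar‖ := by
    intro n
    have h1 : ‖xhat n - xbar‖^2 ≤ ‖x n - xbar‖^2 := by
      have := core' n
      nlinarith [mul_nonneg hδ.le (sq_nonneg ‖x n - phat n‖)]
    have := Real.sqrt_le_sqrt h1
    rwa [Real.sqrt_sq (norm_nonneg _), Real.sqrt_sq (norm_nonneg _)] at this
  -- error bound
  set e : ℕ → ℝ := fun n => (3*Γ + 2) * (‖a n‖ + ‖b n‖ + ‖c n‖) with hedef
  have he0 : ∀ n, 0 ≤ e n := fun n => by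
    apply mul_nonneg (by linarith)
    positivity
  have he : Summable e := by
    rw [hedef]; exact ((ha.add hb).add hc).mul_left _
  have hppdiff : ∀ n, ‖p n - phat n‖ ≤ Γ * ‖a n‖ + ‖b n‖ := by
    intro n
    have h1 : p n - phat n = (J n (y n) - J n (x n - γ n • B (x n))) + b n := by
      rw [hp n]; simp only [hphat]; abel
    have h2 := resolvent_nonexpansive hA.1 (hγpos n) (hJ n) (y n) (x n - γ n • B (x n))
    have h3 : y n - (x n - γ n • B (x n)) = -(γ n • a n) := by
      rw [hy n, smul_add]; abel
    have h4 : ‖y n - (x n - γ n • B (x n))‖ = γ n * ‖a n‖ := by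
      rw [h3, norm_neg, norm_smul, Real.norm_eq_abs, abs_of_pos (hγpos n)]
    calc ‖p n - phat n‖ ≤ ‖J n (y n) - J n (x n - γ n • B (x n))‖ + ‖b n‖ := by
          rw [h1]; exact norm_add_le _ _
      _ ≤ γ n * ‖a n‖ + ‖b n‖ := by rw [← h4]; exact add_le_add_left h2 _
      _ ≤ Γ * ‖a n‖ + ‖b n‖ := by
          have := mul_le_mul_of_nonneg_right (hγΓ n) (norm_nonneg (a n))
          linarith
  have herr : ∀ n, ‖x (n+1) - xhat n‖ ≤ e n := by
    intro n
    have hid : x (n+1) - xhat n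
        = (p n - phat n) - γ n • (B (p n) - B (phat n)) + γ n • (a n - c n) := by
      rw [hx n, hy n, hq n]
      simp only [hxhat, smul_add, smul_sub]
      abel
    have h1 : ‖x (n+1) - xhat n‖
        ≤ ‖p n - phat n‖ + γ n * ‖B (p n) - B (phat n)‖ + γ n * (‖a n‖ + ‖c n‖) := by
      rw [hid]
      have t1 := norm_add_le ((p n - phat n) - γ n • (B (p n) - B (phat n))) (γ n • (a n - c n))
      have t2 := norm_sub_le (p n - phat n) (γ n • (B (p n) - B (phat n)))
      have t3 : ‖γ n • (B (p n) - B (phat n))‖ = γ n * ‖B (p n) - B (phat n)‖ := by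
        rw [norm_smul, Real.norm_eq_abs, abs_of_pos (hγpos n)]
      have t4 : ‖γ n • (a n - c n)‖ ≤ γ n * (‖a n‖ + ‖c n‖) := by
        rw [norm_smul, Real.norm_eq_abs, abs_of_pos (hγpos n)]
        exact mul_le_mul_of_nonneg_left (norm_sub_le _ _) (hγpos n).le
      rw [t3] at t2
      linarith
    have h2 : γ n * ‖B (p n) - B (phat n)‖ ≤ ‖p n - phat n‖ := by
      have l1 := hBlip (p n) (phat n)
      calc γ n * ‖B (p n) - B (phat n)‖ ≤ γ n * (β * ‖p n - phat n‖) :=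
            mul_le_mul_of_nonneg_left l1 (hγpos n).le
        _ = (γ n * β) * ‖p n - phat n‖ := by ring
        _ ≤ 1 * ‖p n - phat n‖ := by
            apply mul_le_mul_of_nonneg_right _ (norm_nonneg _)
            have := hγβ n; linarith
        _ = ‖p n - phat n‖ := one_mul _
    have h3 := hppdiff n
    have h4 : γ n * (‖a n‖ + ‖c n‖) ≤ Γ * (‖a n‖ + ‖c n‖) :=
      mul_le_mul_of_nonneg_right (hγΓ n) (by positivity)
    have hna := norm_nonneg (a n); have hnb := norm_nonneg (b n); have hnc := norm_nonneg (c n)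
    simp only [hedef]
    nlinarith [hΓ0]
  set S : ℝ := ∑' n, e n with hSdef
  have hS0 : 0 ≤ S := tsum_nonneg he0
  have heS : ∀ n, e n ≤ S := fun n => Summable.le_tsum he n (fun i _ => he0 i)
  have hsumle : ∀ n, ∑ k ∈ Finset.range n, e k ≤ S := fun n =>
    Summable.sum_le_tsum (Finset.range n) (fun i _ => he0 i) he
  have hfej : ∀ n, ‖x (n+1) - xbar‖ ≤ ‖x n - xbar‖ + e n := by
    intro n
    have h1 : ‖x (n+1) - xbar‖ ≤ ‖xhat n - xbar‖ + ‖x (n+1) - xhat n‖ := by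
      have : x (n+1) - xbar = (xhat n - xbar) + (x (n+1) - xhat n) := by abel
      rw [this]; exact norm_add_le _ _
    have := herr n
    have := hxhatle n
    linarith
  set M : ℝ := ‖x 0 - xbar‖ + S with hMdef
  have hbound : ∀ n, ‖x n - xbar‖ ≤ M := by
    have key : ∀ n, ‖x n - xbar‖ ≤ ‖x 0 - xbar‖ + ∑ k ∈ Finset.range n, e k := by
      intro n
      induction n with
      | zero => simp
      | succ n ih =>
        calc ‖x (n+1) - xbar‖ ≤ ‖x n - xbar‖ + e n := hfej n
          _ ≤ ‖x 0 - xbar‖ + ∑ k ∈ Finset.range n, e k + e n := by linarith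
          _ = ‖x 0 - xbar‖ + ∑ k ∈ Finset.range (n+1), e k := by
              rw [Finset.sum_range_succ]; ring
    intro n
    have := key n
    have := hsumle n
    simp only [hMdef]; linarith
  have hM0 : 0 ≤ M := le_trans (norm_nonneg _) (hbound 0)
  have hkey : ∀ n, δ * ‖x n - phat n‖^2
      ≤ ‖x n - xbar‖^2 - ‖x (n+1) - xbar‖^2 + (2*M + S) * e n := by
    intro n
    have h1 : ‖x (n+1) - xbar‖ ≤ ‖xhat n - xbar‖ + e n := by
      have t : x (n+1) - xbar = (xhat n - xbar) + (x (n+1) - xhat n) := by abel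
      have := herr n
      calc ‖x (n+1) - xbar‖ ≤ ‖xhat n - xbar‖ + ‖x (n+1) - xhat n‖ := by
            rw [t]; exact norm_add_le _ _
        _ ≤ ‖xhat n - xbar‖ + e n := by linarith
    have hsq : ‖x (n+1) - xbar‖^2 ≤ (‖xhat n - xbar‖ + e n)^2 :=
      pow_le_pow_left₀ (norm_nonneg _) h1 2
    have h2 : ‖xhat n - xbar‖ ≤ M := le_trans (hxhatle n) (hbound n)
    have h3 := core' n
    have h4 := he0 n
    have h5 := heS n
    have h6 : e n * ‖xhat n - xbar‖ ≤ e n * M := mul_le_mul_of_nonneg_left h2 h4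
    have h7 : e n * e n ≤ S * e n := mul_le_mul_of_nonneg_right h5 h4
    nlinarith
  -- summability of δ * d
  have hsumd : Summable (fun n => δ * ‖x n - phat n‖^2) := by
    apply summable_of_sum_range_le
      (c := ‖x 0 - xbar‖^2 + (2*M + S) * S)
      (fun n => mul_nonneg hδ.le (sq_nonneg _))
    intro n
    have tele : ∑ k ∈ Finset.range n, (‖x k - xbar‖^2 - ‖x (k+1) - xbar‖^2)
        = ‖x 0 - xbar‖^2 - ‖x n - xbar‖^2 :=
      Finset.sum_range_sub' (fun k => ‖x k - xbar‖^2) n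
    have hsum1 : ∑ k ∈ Finset.range n, δ * ‖x k - phat k‖^2
        ≤ ∑ k ∈ Finset.range n, (‖x k - xbar‖^2 - ‖x (k+1) - xbar‖^2 + (2*M + S) * e k) :=
      Finset.sum_le_sum (fun k _ => hkey k)
    rw [Finset.sum_add_distrib, tele, ← Finset.mul_sum, ← Finset.mul_sum] at hsum1
    have h8 : (2*M + S) * ∑ k ∈ Finset.range n, e k ≤ (2*M + S) * S :=
      mul_le_mul_of_nonneg_left (hsumle n) (by linarith)
    rw [← Finset.mul_sum]
    linarith [sq_nonneg ‖x n - xbar‖]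
  have hd2 : Tendsto (fun n => ‖x n - phat n‖^2) atTop (𝓝 0) := by
    have h0 := hsumd.tendsto_atTop_zero
    have h1 := h0.const_mul δ⁻¹
    simp only [mul_zero] at h1
    have heq : (fun n => δ⁻¹ * (δ * ‖x n - phat n‖^2)) = fun n => ‖x n - phat n‖^2 := by
      funext n; field_simp
    rwa [heq] at h1
  have hdist : Tendsto (fun n => ‖x n - phat n‖) atTop (𝓝 0) := by
    have h := hd2.sqrt
    rw [Real.sqrt_zero] at h
    have heq : (fun n => Real.sqrt (‖x n - phat n‖^2)) = fun n => ‖x n - phat n‖ :=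
      funext fun n => Real.sqrt_sq (norm_nonneg _)
    rwa [heq] at h
  -- the inexact resolvent point
  set pt : ℕ → H := fun n => J n (y n) with hptdef
  have ha0 : Tendsto (fun n => ‖a n‖) atTop (𝓝 0) := ha.tendsto_atTop_zero
  have hb0 : Tendsto (fun n => ‖b n‖) atTop (𝓝 0) := hb.tendsto_atTop_zero
  have hptphat : ∀ n, ‖phat n - pt n‖ ≤ Γ * ‖a n‖ := by
    intro n
    have h2 := resolvent_nonexpansive hA.1 (hγpos n) (hJ n) (x n - γ n • B (x n)) (y n)
    have h3 : (x n - γ n • B (x n)) - y n = γ n • a n := by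
      rw [hy n, smul_add]; abel
    have h4 : ‖(x n - γ n • B (x n)) - y n‖ = γ n * ‖a n‖ := by
      rw [h3, norm_smul, Real.norm_eq_abs, abs_of_pos (hγpos n)]
    have h5 : γ n * ‖a n‖ ≤ Γ * ‖a n‖ := mul_le_mul_of_nonneg_right (hγΓ n) (norm_nonneg _)
    calc ‖phat n - pt n‖ ≤ ‖(x n - γ n • B (x n)) - y n‖ := h2
      _ = γ n * ‖a n‖ := h4
      _ ≤ Γ * ‖a n‖ := h5
  have hxpt : Tendsto (fun n => ‖x n - pt n‖) atTop (𝓝 0) := by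
    have hb' : ∀ n, ‖x n - pt n‖ ≤ ‖x n - phat n‖ + Γ * ‖a n‖ := by
      intro n
      have t : x n - pt n = (x n - phat n) + (phat n - pt n) := by abel
      calc ‖x n - pt n‖ ≤ ‖x n - phat n‖ + ‖phat n - pt n‖ := by
            rw [t]; exact norm_add_le _ _
        _ ≤ ‖x n - phat n‖ + Γ * ‖a n‖ := by linarith [hptphat n]
    have htend : Tendsto (fun n => ‖x n - phat n‖ + Γ * ‖a n‖) atTop (𝓝 0) := by
      have := hdist.add (ha0.const_mul Γ)
      simpa using this
    exact squeeze_zero (fun n => norm_nonneg _) hb' htend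
  -- graph elements
  choose u huA huy using fun n => hJ n (y n)
  set v : ℕ → H := fun n => u n + B (pt n) with hvdef
  have hvmem : ∀ n, v n ∈ (fun z => z + B (pt n)) '' A (pt n) := fun n =>
    ⟨u n, huA n, rfl⟩
  have hvbound : ∀ n, ‖v n‖ ≤ ε⁻¹ * (2 * ‖x n - pt n‖ + Γ * ‖a n‖) := by
    intro n
    have hid : γ n • v n = (x n - pt n) - γ n • (B (x n) - B (pt n)) - γ n • a n := by
      have h1 : y n = pt n + γ n • u n := huy n
      have h2 : γ n • u n = y n - pt n := by rw [h1]; abel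
      simp only [hvdef, smul_add, h2, hy n, smul_add, smul_sub]
      abel
    have h3 : ‖γ n • v n‖ ≤ 2 * ‖x n - pt n‖ + Γ * ‖a n‖ := by
      rw [hid]
      have t1 := norm_sub_le ((x n - pt n) - γ n • (B (x n) - B (pt n))) (γ n • a n)
      have t2 := norm_sub_le (x n - pt n) (γ n • (B (x n) - B (pt n)))
      have t3 : ‖γ n • (B (x n) - B (pt n))‖ ≤ ‖x n - pt n‖ := by
        rw [norm_smul, Real.norm_eq_abs, abs_of_pos (hγpos n)]
        calc γ n * ‖B (x n) - B (pt n)‖ ≤ γ n * (β * ‖x n - pt n‖) :=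
              mul_le_mul_of_nonneg_left (hBlip _ _) (hγpos n).le
          _ = (γ n * β) * ‖x n - pt n‖ := by ring
          _ ≤ 1 * ‖x n - pt n‖ :=
              mul_le_mul_of_nonneg_right (by linarith [hγβ n]) (norm_nonneg _)
          _ = ‖x n - pt n‖ := one_mul _
      have t4 : ‖γ n • a n‖ ≤ Γ * ‖a n‖ := by
        rw [norm_smul, Real.norm_eq_abs, abs_of_pos (hγpos n)]
        exact mul_le_mul_of_nonneg_right (hγΓ n) (norm_nonneg _)
      linarith
    have h5 : ε * ‖v n‖ ≤ ‖γ n • v n‖ := by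
      rw [norm_smul, Real.norm_eq_abs, abs_of_pos (hγpos n)]
      exact mul_le_mul_of_nonneg_right (hγε n) (norm_nonneg _)
    have h6 : ε * ‖v n‖ ≤ 2 * ‖x n - pt n‖ + Γ * ‖a n‖ := le_trans h5 h3
    calc ‖v n‖ = ε⁻¹ * (ε * ‖v n‖) := by field_simp
      _ ≤ ε⁻¹ * (2 * ‖x n - pt n‖ + Γ * ‖a n‖) :=
          mul_le_mul_of_nonneg_left h6 (inv_nonneg.mpr hε0.le)
  have hv0 : Tendsto v atTop (𝓝 0) := by
    rw [tendsto_zero_iff_norm_tendsto_zero]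
    have htend : Tendsto (fun n => ε⁻¹ * (2 * ‖x n - pt n‖ + Γ * ‖a n‖)) atTop (𝓝 0) := by
      have := ((hxpt.const_mul 2).add (ha0.const_mul Γ)).const_mul ε⁻¹
      simpa using this
    exact squeeze_zero (fun n => norm_nonneg _) hvbound htend
  have hweakpt : WeakTendsto pt xbar := by
    intro w
    have h1 : Tendsto (fun n => ⟪pt n - x n, w⟫_ℝ) atTop (𝓝 0) := by
      have hbnd : ∀ n, ‖⟪pt n - x n, w⟫_ℝ‖ ≤ ‖x n - pt n‖ * ‖w‖ := by
        intro n
        calc ‖⟪pt n - x n, w⟫_ℝ‖ ≤ ‖pt n - x n‖ * ‖w‖ := by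
              rw [Real.norm_eq_abs]; exact abs_real_inner_le_norm _ _
          _ = ‖x n - pt n‖ * ‖w‖ := by rw [norm_sub_rev]
      exact squeeze_zero_norm hbnd (by simpa using hxpt.mul_const ‖w‖)
    have h2 := (hweak w).add h1
    rw [add_zero] at h2
    have heq : (fun n => ⟪x n, w⟫_ℝ + ⟪pt n - x n, w⟫_ℝ) = fun n => ⟪pt n, w⟫_ℝ := by
      funext n; rw [inner_sub_left]; ring
    rwa [heq] at h2
  have hzero : (0:H) ∈ (fun z => z + B xbar) '' A xbar :=
    ⟨-B xbar, hxbar, by simp⟩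
  have hpttend : Tendsto pt atTop (𝓝 xbar) := hdemi pt v 0 hvmem hzero hweakpt hv0
  have hxpt0 : Tendsto (fun n => x n - pt n) atTop (𝓝 0) :=
    tendsto_zero_iff_norm_tendsto_zero.mpr hxpt
  constructor
  · have h := hpttend.add hxpt0
    rw [add_zero] at h
    have heq : (fun n => pt n + (x n - pt n)) = x := funext fun n => by abel
    rwa [heq] at h
  · have hb0' : Tendsto b atTop (𝓝 0) := tendsto_zero_iff_norm_tendsto_zero.mpr hb0
    have h := hpttend.add hb0'
    rw [add_zero] at h
    have heq : (fun n => pt n + b n) = p := funext fun n => (hp n).symm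
    rwa [heq] at h
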